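/- Let φ: ℝᵐ → ℝ be convex and differentiable, F = {w ∈ ℝᵐ : h_j(w) ≤ 0, j = 1,…,r} with each h_j continuously differentiable, and suppose F is convex, the Slater condition holds (∃y₀ with h_j(y₀) < 0 for all j), and the nondegeneracy condition holds (y ∈ F and h_j(y) = 0 imply ∇h_j(y) ≠ 0). Then y ∈ F satisfies the KKT conditions—∃λ_j ≥ 0 with ∇φ(y) + Σ_j λ_j ∇h_j(y) = 0 and λ_j h_j(y) = 0—if and only if y is a global minimizer of φ over F. -/

import Mathlib

open Set Filter Topology
open scoped RealInnerProductSpace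

variable {E : Type*} [NormedAddCommGroup E] [InnerProductSpace ℝ E]

/-- Farkas alternative, by induction on the number of generators. -/
theorem farkas_alt : ∀ (n : ℕ) (a : Fin n → E) (b : E),
    (∃ μ : Fin n → ℝ, (∀ i, 0 ≤ μ i) ∧ b = ∑ i, μ i • a i) ∨
    (∃ x : E, (∀ i, ⟪a i, x⟫ ≤ 0) ∧ 0 < ⟪b, x⟫) := by
  intro n
  induction n with
  | zero =>
    intro a b
    by_cases hb : b = 0
    · exact Or.inl ⟨0, fun i => le_rfl, by simp [hb]⟩
    · exact Or.inr ⟨b, fun i => i.elim0, (by simpa [real_inner_self_eq_norm_sq] using pow_pos (norm_pos_iff.2 hb) 2)⟩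
  | succ n ih =>
    intro a b
    set a' : Fin n → E := fun i => a i.castSucc with ha'
    set p : E := a (Fin.last n) with hp
    rcases ih a' b with ⟨μ, hμ, hb⟩ | ⟨x, hx, hbx⟩
    · refine Or.inl ⟨Fin.snoc μ 0, ?_, ?_⟩
      · intro i
        refine Fin.lastCases ?_ ?_ i <;> simp [Fin.snoc_castSucc, hμ]
      · rw [Fin.sum_univ_castSucc]
        simp [Fin.snoc_castSucc, hb, ha']
    · by_cases hpx : ⟪p, x⟫ ≤ 0
      · refine Or.inr ⟨x, ?_, hbx⟩
        intro i
        refine Fin.lastCases hpx (fun i => hx i) i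
      · push_neg at hpx
        set α : ℝ := ⟪p, x⟫ with hα
        have hα0 : α ≠ 0 := ne_of_gt hpx
        set pr : E → E := fun v => v - (⟪v, x⟫ / α) • p with hpr
        rcases ih (fun i => pr (a' i)) (pr b) with ⟨μ, hμ, hb⟩ | ⟨z, hz, hbz⟩
        · set c : ℝ := (⟪b, x⟫ - ∑ i, μ i * ⟪a' i, x⟫) / α with hc
          have hc0 : 0 ≤ c := by
            apply div_nonneg _ hpx.le
            have : ∑ i, μ i * ⟪a' i, x⟫ ≤ 0 :=
              Finset.sum_nonpos fun i _ => mul_nonpos_of_nonneg_of_nonpos (hμ i) (hx i)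
            linarith [hbx]
          refine Or.inl ⟨Fin.snoc μ c, ?_, ?_⟩
          · intro i; refine Fin.lastCases ?_ ?_ i <;> simp [Fin.snoc_castSucc, hμ, hc0]
          · rw [Fin.sum_univ_castSucc]
            simp only [Fin.snoc_castSucc, Fin.snoc_last]
            have expand : pr b = (∑ i, μ i • a' i) - (∑ i, μ i * (⟪a' i, x⟫ / α)) • p := by
              rw [hb]
              simp only [hpr, smul_sub, Finset.sum_sub_distrib, smul_smul]
              rw [Finset.sum_smul]
            have : b = (∑ i, μ i • a' i) + c • p := by
              have h1 : b - (⟪b, x⟫ / α) • p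
                  = (∑ i, μ i • a' i) - (∑ i, μ i * (⟪a' i, x⟫ / α)) • p := expand
              have h2 : c = ⟪b, x⟫ / α - ∑ i, μ i * (⟪a' i, x⟫ / α) := by
                rw [hc, sub_div, Finset.sum_div]
                congr 1
                exact Finset.sum_congr rfl fun i _ => by ring
              rw [h2, sub_smul, Finset.sum_smul] at *
              have := h1
              abel_nf at this ⊢
              linear_combination (norm := module) this
            exact this
        · set w : E := z - (⟪p, z⟫ / α) • x with hw
          have key : ∀ v : E, ⟪v, w⟫ = ⟪pr v, z⟫ := by
            intro v
            simp only [hw, hpr, inner_sub_right, inner_sub_left, real_inner_smul_right,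
              real_inner_smul_left]
            ring
          have hpw : ⟪p, w⟫ = 0 := by
            simp only [hw, inner_sub_right, real_inner_smul_right, ← hα]
            field_simp
            ring
          refine Or.inr ⟨w, ?_, ?_⟩
          · intro i
            refine Fin.lastCases (le_of_eq hpw) (fun i => ?_) i
            rw [key]; exact hz i
          · rw [key]; exact hbz

theorem farkas {n : ℕ} (a : Fin n → E) (b : E)
    (H : ∀ x : E, (∀ i, ⟪a i, x⟫ ≤ 0) → ⟪b, x⟫ ≤ 0) :
    ∃ μ : Fin n → ℝ, (∀ i, 0 ≤ μ i) ∧ b = ∑ i, μ i • a i := by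
  rcases farkas_alt n a b with h | ⟨x, hx, hbx⟩
  · exact h
  · exact absurd (H x hx) (not_le.2 hbx)

section helpers

variable [CompleteSpace E]

/-- inner with gradient equals fderiv applied. -/
theorem inner_gradient_eq (f : E → ℝ) (x v : E) :
    ⟪gradient f x, v⟫ = fderiv ℝ f x v := by
  rw [gradient, ← InnerProductSpace.toDual_apply_apply, LinearIsometryEquiv.apply_symm_apply]

/-- derivative along a line. -/
theorem line_hasDerivAt {f : E → ℝ} (hf : DifferentiableAt ℝ f y) (v : E) :
    HasDerivAt (fun t : ℝ => f (y + t • v)) (⟪gradient f y, v⟫) 0 := by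
  have hc : HasDerivAt (fun t : ℝ => y + t • v) v 0 := by
    simpa using ((hasDerivAt_id (0:ℝ)).smul_const v).const_add y
  have hfd : HasFDerivAt f (fderiv ℝ f y) ((fun t : ℝ => y + t • v) 0) := by
    simpa using hf.hasFDerivAt
  have := hfd.comp_hasDerivAt 0 hc
  simpa [Function.comp_def, inner_gradient_eq] using this

theorem deriv_le_of_slope {g : ℝ → ℝ} {d c : ℝ} (hg : HasDerivAt g d 0)
    (hs : ∀ t ∈ Set.Ioc (0:ℝ) 1, (g t - g 0) / t ≤ c) : d ≤ c := by
  have ht : Filter.Tendsto (slope g 0) (nhdsWithin 0 (Set.Ioi 0)) (nhds d) :=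
    (hasDerivAt_iff_tendsto_slope.1 hg).mono_left
      (nhdsWithin_mono _ (fun x hx => ne_of_gt hx))
  refine le_of_tendsto ht ?_
  filter_upwards [Ioc_mem_nhdsGT_of_mem (by norm_num : (0:ℝ) ∈ Set.Ico 0 1)] with t htm
  rw [slope_def_field, sub_zero]
  exact hs t htm

theorem deriv_ge_of_slope {g : ℝ → ℝ} {d c : ℝ} (hg : HasDerivAt g d 0)
    (hs : ∀ t ∈ Set.Ioc (0:ℝ) 1, c ≤ (g t - g 0) / t) : c ≤ d := by
  have := deriv_le_of_slope (c := -c) hg.neg (fun t htm => by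
    have h1 := hs t htm
    have ht0 := htm.1
    show (-(g t) - -(g 0)) / t ≤ -c
    rw [div_le_iff₀ ht0]
    rw [le_div_iff₀ ht0] at h1
    linarith)
  linarith

theorem eventually_neg_of_deriv_neg {g : ℝ → ℝ} {d : ℝ} (hg : HasDerivAt g d 0)
    (hg0 : g 0 = 0) (hd : d < 0) : ∀ᶠ t in nhdsWithin 0 (Set.Ioi 0), g t < 0 := by
  have ht : Filter.Tendsto (slope g 0) (nhdsWithin 0 (Set.Ioi 0)) (nhds d) :=
    (hasDerivAt_iff_tendsto_slope.1 hg).mono_left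
      (nhdsWithin_mono _ (fun x hx => ne_of_gt hx))
  have hev : ∀ᶠ t in nhdsWithin 0 (Set.Ioi 0), slope g 0 t < 0 :=
    ht.eventually (Filter.Tendsto.eventually_lt_const hd tendsto_id) |>.mono (fun t h => h)
  filter_upwards [hev, self_mem_nhdsWithin] with t hst htpos
  rw [slope_def_field, hg0, sub_zero, sub_zero] at hst
  rw [show g t = (g t / t) * t from (div_mul_cancel₀ _ (ne_of_gt htpos)).symm]
  exact mul_neg_of_neg_of_pos hst htpos

end helpers
section main

open Filter

theorem stmt5 {m r : ℕ}
    (φ : EuclideanSpace ℝ (Fin m) → ℝ)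
    (hφconv : ConvexOn ℝ univ φ) (hφdiff : Differentiable ℝ φ)
    (h : Fin r → EuclideanSpace ℝ (Fin m) → ℝ)
    (hsmooth : ∀ j, ContDiff ℝ 1 (h j))
    (F : Set (EuclideanSpace ℝ (Fin m)))
    (hFdef : F = {w | ∀ j, h j w ≤ 0})
    (hFconv : Convex ℝ F)
    -- Slater condition
    (hSlater : ∃ y₀, ∀ j, h j y₀ < 0)
    -- nondegeneracy condition
    (hnd : ∀ y ∈ F, ∀ j, h j y = 0 → gradient (h j) y ≠ 0)
    (y : EuclideanSpace ℝ (Fin m)) (hy : y ∈ F) :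
    -- KKT ↔ global minimizer
    ((∃ lam : Fin r → ℝ, (∀ j, 0 ≤ lam j) ∧
        gradient φ y + ∑ j, lam j • gradient (h j) y = 0 ∧
        ∀ j, lam j * h j y = 0)
      ↔ ∀ z ∈ F, φ y ≤ φ z) := by
  have hdiff : ∀ j, Differentiable ℝ (h j) := fun j => (hsmooth j).differentiable one_ne_zero
  have hyh : ∀ j, h j y ≤ 0 := by rw [hFdef] at hy; exact hy
  have hmemF : ∀ w, (∀ j, h j w ≤ 0) → w ∈ F := by intro w hw; rw [hFdef]; exact hw
  have hFh : ∀ w ∈ F, ∀ j, h j w ≤ 0 := by intro w hw; rw [hFdef] at hw; exact hw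
  have hseg : ∀ z ∈ F, ∀ t : ℝ, t ∈ Set.Ioc (0:ℝ) 1 → y + t • (z - y) ∈ F := by
    intro z hz t ht
    have := hFconv hy hz (by linarith [ht.2] : (0:ℝ) ≤ 1 - t) ht.1.le (by ring)
    have heq : (1 - t) • y + t • z = y + t • (z - y) := by module
    rwa [heq] at this
  -- Lemma A : directional derivatives of active constraints are ≤ 0 along feasible directions
  have keyA : ∀ z ∈ F, ∀ j, h j y = 0 → ⟪gradient (h j) y, z - y⟫ ≤ 0 := by
    intro z hz j hj
    refine deriv_le_of_slope (line_hasDerivAt ((hdiff j) y) (z - y)) ?_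
    intro t ht
    have h0 : h j (y + (0:ℝ) • (z - y)) = 0 := by simpa using hj
    have hmem := hFh _ (hseg z hz t ht) j
    rw [h0, sub_zero]
    exact div_nonpos_of_nonpos_of_nonneg hmem ht.1.le
  constructor
  · -- KKT → minimizer
    rintro ⟨lam, hlam0, hlameq, hlamcs⟩ z hz
    have hterm : ∀ j, lam j * ⟪gradient (h j) y, z - y⟫ ≤ 0 := by
      intro j
      rcases eq_or_lt_of_le (hyh j) with hj0 | hjneg
      · exact mul_nonpos_of_nonneg_of_nonpos (hlam0 j) (keyA z hz j hj0)
      · have hl0 : lam j = 0 := by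
          rcases mul_eq_zero.1 (hlamcs j) with h1 | h2
          · exact h1
          · exact absurd h2 (ne_of_lt hjneg)
        simp [hl0]
    have hsum : ⟪gradient φ y, z - y⟫ = - ∑ j, lam j * ⟪gradient (h j) y, z - y⟫ := by
      have := congrArg (fun w => ⟪w, z - y⟫) hlameq
      simp only [inner_add_left, sum_inner, real_inner_smul_left, inner_zero_left] at this
      linarith
    have hpos : 0 ≤ ⟪gradient φ y, z - y⟫ := by
      rw [hsum, neg_nonneg]
      exact Finset.sum_nonpos fun j _ => hterm j
    have hci : ⟪gradient φ y, z - y⟫ ≤ φ z - φ y := by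
      refine deriv_le_of_slope (line_hasDerivAt (hφdiff y) (z - y)) ?_
      intro t ht
      have hcv := hφconv.2 (Set.mem_univ y) (Set.mem_univ z)
        (by linarith [ht.2] : (0:ℝ) ≤ 1 - t) ht.1.le (by ring)
      have heq : (1 - t) • y + t • z = y + t • (z - y) := by module
      rw [heq] at hcv
      rw [div_le_iff₀ ht.1]
      simp only [smul_eq_mul] at hcv
      have h0 : φ (y + (0:ℝ) • (z - y)) = φ y := by simp
      rw [h0]
      nlinarith [hcv]
    linarith
  · -- minimizer → KKT
    intro hmin
    -- variational inequality
    have hvar : ∀ z ∈ F, 0 ≤ ⟪gradient φ y, z - y⟫ := by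
      intro z hz
      refine deriv_ge_of_slope (line_hasDerivAt (hφdiff y) (z - y)) ?_
      intro t ht
      have hmem := hseg z hz t ht
      have h0 : φ (y + (0:ℝ) • (z - y)) = φ y := by simp
      rw [h0]
      apply div_nonneg _ ht.1.le
      have := hmin _ hmem
      simpa using this
    obtain ⟨y₀, hy₀⟩ := hSlater
    -- a ball around the Slater point is feasible
    have hopen : IsOpen {w : EuclideanSpace ℝ (Fin m) | ∀ j, h j w < 0} := by
      have hiff : {w : EuclideanSpace ℝ (Fin m) | ∀ j, h j w < 0}
          = ⋂ j, {w | h j w < 0} := by ext w; simp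
      rw [hiff]
      exact isOpen_iInter_of_finite fun j =>
        isOpen_lt (hsmooth j).continuous continuous_const
    obtain ⟨ε, hε, hball⟩ := Metric.isOpen_iff.1 hopen y₀ hy₀
    have hballF : Metric.ball y₀ ε ⊆ F := fun w hw => hmemF w (fun j => (hball hw j).le)
    -- strict inequality for active constraints at the Slater point
    have hstrict : ∀ j, h j y = 0 → ⟪gradient (h j) y, y₀ - y⟫ < 0 := by
      intro j hj
      set a := gradient (h j) y with ha
      have ha0 : a ≠ 0 := hnd y hy j hj
      have hna : (0:ℝ) < ‖a‖ := norm_pos_iff.2 ha0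
      set w := y₀ + ((ε / 2) / ‖a‖) • a with hwdef
      have hwF : w ∈ F := by
        apply hballF
        rw [Metric.mem_ball, dist_eq_norm]
        have : w - y₀ = ((ε / 2) / ‖a‖) • a := by rw [hwdef]; abel
        rw [this, norm_smul]
        rw [Real.norm_eq_abs, abs_of_pos (by positivity)]
        rw [div_mul_cancel₀ _ (ne_of_gt hna)]
        linarith
      have hA := keyA w hwF j hj
      have hweq : w - y = (y₀ - y) + ((ε / 2) / ‖a‖) • a := by rw [hwdef]; abel
      rw [hweq, inner_add_right, real_inner_smul_right,
        real_inner_self_eq_norm_sq] at hA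
      have hpos2 : 0 < ((ε / 2) / ‖a‖) * ‖a‖ ^ 2 := by positivity
      linarith
    -- cone condition
    have hcone : ∀ x, (∀ j, h j y = 0 → ⟪gradient (h j) y, x⟫ ≤ 0) →
        0 ≤ ⟪gradient φ y, x⟫ := by
      intro x hx
      set c0 := ⟪gradient φ y, y₀ - y⟫ with hc0
      have H : ∀ ε' : ℝ, 0 < ε' → 0 ≤ ⟪gradient φ y, x⟫ + ε' * c0 := by
        intro ε' hε'
        set v := x + ε' • (y₀ - y) with hv
        have hactive : ∀ j, h j y = 0 → ⟪gradient (h j) y, v⟫ < 0 := by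
          intro j hj
          rw [hv, inner_add_right, real_inner_smul_right]
          have h1 := hx j hj
          have h2 := hstrict j hj
          nlinarith
        have hev : ∀ᶠ t in nhdsWithin (0:ℝ) (Set.Ioi 0), ∀ j, h j (y + t • v) ≤ 0 := by
          rw [eventually_all]
          intro j
          rcases eq_or_lt_of_le (hyh j) with hj0 | hjneg
          · have := eventually_neg_of_deriv_neg (line_hasDerivAt ((hdiff j) y) v)
              (by simpa using hj0) (hactive j hj0)
            exact this.mono fun t ht => ht.le
          · have hc : ContinuousAt (fun t : ℝ => h j (y + t • v)) 0 := by
              apply (hsmooth j).continuous.continuousAt.comp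
              exact (continuous_const.add (continuous_id.smul continuous_const)).continuousAt
            have hlt : ∀ᶠ t in nhds (0:ℝ), h j (y + t • v) < 0 := by
              have hcon : Filter.Tendsto (fun t : ℝ => h j (y + t • v))
                  (nhds 0) (nhds (h j y)) := by simpa using hc.tendsto
              exact hcon.eventually_lt_const hjneg
            exact (hlt.filter_mono nhdsWithin_le_nhds).mono fun t ht => ht.le
        obtain ⟨t, htall, htpos⟩ := (hev.and eventually_mem_nhdsWithin).exists
        have hzF : y + t • v ∈ F := hmemF _ htall
        have := hvar _ hzF
        rw [add_sub_cancel_left, real_inner_smul_right] at this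
        have htpos' : (0:ℝ) < t := Set.mem_Ioi.1 htpos
        have hv0 : 0 ≤ ⟪gradient φ y, v⟫ := by
          by_contra hcon
          push_neg at hcon
          nlinarith
        rw [hv, inner_add_right, real_inner_smul_right] at hv0
        exact hv0
      by_contra hneg
      push_neg at hneg
      rcases le_or_gt c0 0 with hle | hlt
      · have := H 1 one_pos; nlinarith
      · have hεp : 0 < -⟪gradient φ y, x⟫ / (2 * c0) := by
          apply div_pos (by linarith) (by linarith)
        have := H _ hεp
        have heq : -⟪gradient φ y, x⟫ / (2 * c0) * c0 = -⟪gradient φ y, x⟫ / 2 := by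
          field_simp
        rw [heq] at this
        linarith
    -- Farkas
    set A : Fin r → EuclideanSpace ℝ (Fin m) :=
      fun j => if h j y = 0 then gradient (h j) y else 0 with hA
    obtain ⟨μ, hμ0, hμeq⟩ := farkas A (-(gradient φ y)) (by
      intro x hx
      have : 0 ≤ ⟪gradient φ y, x⟫ := by
        apply hcone
        intro j hj
        simpa [hA, hj] using hx j
      rw [inner_neg_left]
      linarith)
    refine ⟨fun j => if h j y = 0 then μ j else 0, ?_, ?_, ?_⟩
    · intro j; by_cases hj : h j y = 0 <;> simp [hj, hμ0]
    · have hsums : ∑ j, (if h j y = 0 then μ j else 0) • gradient (h j) y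
          = ∑ j, μ j • A j := by
        apply Finset.sum_congr rfl
        intro j _
        by_cases hj : h j y = 0 <;> simp [hA, hj]
      rw [hsums, ← hμeq]
      simp
    · intro j
      by_cases hj : h j y = 0 <;> simp [hj]

end main
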